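/- For Gaussians p = N(μ₁, Σ₁) and q = N(μ₂, Σ₂) on ℝⁿ, the quantity (‖μ₁ − μ₂‖₂² + ‖Σ₁^{1/2} − Σ₂^{1/2}‖_F²)^{1/2} is greater than or equal to the 2-Wasserstein distance W₂(p, q) = (‖μ₁ − μ₂‖₂² + Tr(Σ₁ + Σ₂ − 2(Σ₁^{1/2} Σ₂ Σ₁^{1/2})^{1/2}))^{1/2}, with equality when Σ₁ and Σ₂ commute. -/

import Mathlib

open Matrix

/-- The positive semidefinite square root of a positive semidefinite matrix
(the definition `Matrix.PosSemidef.sqrt` of the older Mathlib, since removed). -/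
noncomputable def Matrix.PosSemidef.sqrt {n : Type*} [Fintype n] [DecidableEq n]
    {A : Matrix n n ℝ} (hA : A.PosSemidef) : Matrix n n ℝ :=
  hA.1.eigenvectorUnitary.1 * diagonal ((↑) ∘ (fun x => Real.sqrt x) ∘ hA.1.eigenvalues) *
    (star hA.1.eigenvectorUnitary : Matrix n n ℝ)

open scoped MatrixOrder in
theorem Matrix.PosSemidef.sqrt_eq_cfcSqrt {m : Type*} [Fintype m] [DecidableEq m]
    {A : Matrix m m ℝ} (hA : A.PosSemidef) : hA.sqrt = CFC.sqrt A := by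
  rw [CFC.sqrt_eq_cfc, cfc_nnreal_eq_real _ A hA.nonneg, hA.1.cfc_eq]
  unfold Matrix.PosSemidef.sqrt IsHermitian.cfc
  congr 2
  congr 1
  funext i
  simp [hA.eigenvalues_nonneg i]

open scoped MatrixOrder in
theorem Matrix.PosSemidef.posSemidef_sqrt {m : Type*} [Fintype m] [DecidableEq m]
    {A : Matrix m m ℝ} (hA : A.PosSemidef) : hA.sqrt.PosSemidef := by
  rw [hA.sqrt_eq_cfcSqrt]
  exact (CFC.sqrt_nonneg A).posSemidef

open scoped MatrixOrder in
theorem Matrix.PosSemidef.sqrt_mul_self {m : Type*} [Fintype m] [DecidableEq m]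
    {A : Matrix m m ℝ} (hA : A.PosSemidef) : hA.sqrt * hA.sqrt = A := by
  rw [hA.sqrt_eq_cfcSqrt]
  exact CFC.sqrt_mul_sqrt_self A hA.nonneg

open scoped MatrixOrder in
theorem Matrix.PosSemidef.eq_sqrt_of_sq_eq {m : Type*} [Fintype m] [DecidableEq m]
    {A : Matrix m m ℝ} (hA : A.PosSemidef) (B : Matrix m m ℝ) (hB : B.PosSemidef)
    (hAB : A ^ 2 = B) : A = hB.sqrt := by
  rw [hB.sqrt_eq_cfcSqrt]
  exact (CFC.sqrt_unique (by rw [← pow_two]; exact hAB) hA.nonneg).symm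

variable {n : ℕ}

private lemma myConjMul {U : Matrix (Fin n) (Fin n) ℝ} (hU : U ∈ Matrix.unitaryGroup (Fin n) ℝ)
    (X Y : Matrix (Fin n) (Fin n) ℝ) :
    star U * (X * Y) * U = (star U * X * U) * (star U * Y * U) := by
  have h : U * star U = 1 := (Matrix.mem_unitaryGroup_iff).mp hU
  calc star U * (X * Y) * U = star U * X * (U * star U) * Y * U := by
        rw [h]; noncomm_ring
    _ = (star U * X * U) * (star U * Y * U) := by noncomm_ring

private lemma conj_inj {U : Matrix (Fin n) (Fin n) ℝ} (hU : U ∈ Matrix.unitaryGroup (Fin n) ℝ)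
    {X Y : Matrix (Fin n) (Fin n) ℝ} (h : star U * X * U = star U * Y * U) : X = Y := by
  have h1 : U * star U = 1 := (Matrix.mem_unitaryGroup_iff).mp hU
  have := congrArg (fun Z => U * Z * star U) h
  simpa only [← mul_assoc, h1, one_mul, mul_assoc U, mul_one,
    (show ∀ Z : Matrix (Fin n) (Fin n) ℝ, U * (star U * X * U * star U) = _ from fun _ => rfl)] using
    (by
      calc X = (U * star U) * X * (U * star U) := by rw [h1]; noncomm_ring
        _ = U * (star U * X * U) * star U := by noncomm_ring
        _ = U * (star U * Y * U) * star U := by rw [h]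
        _ = (U * star U) * Y * (U * star U) := by noncomm_ring
        _ = Y := by rw [h1]; noncomm_ring)

/-- If a PSD matrix commutes with `M`, so does its square root. -/
private lemma sqrt_comm {A M : Matrix (Fin n) (Fin n) ℝ} (hA : A.PosSemidef)
    (h : A * M = M * A) : hA.sqrt * M = M * hA.sqrt := by
  set U : Matrix (Fin n) (Fin n) ℝ := (hA.1.eigenvectorUnitary : Matrix (Fin n) (Fin n) ℝ) with hUdef
  have hUmem : U ∈ Matrix.unitaryGroup (Fin n) ℝ := hA.1.eigenvectorUnitary.2
  have hU1 : U * star U = 1 := (Matrix.mem_unitaryGroup_iff).mp hUmem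
  have hU1' : star U * U = 1 := (Matrix.mem_unitaryGroup_iff').mp hUmem
  set lam := hA.1.eigenvalues with hlam
  have hspec : A = U * diagonal (RCLike.ofReal ∘ lam) * star U := hA.1.spectral_theorem
  set T := star U * M * U with hT
  have hDT : diagonal (RCLike.ofReal ∘ lam) * T = T * diagonal (RCLike.ofReal ∘ lam) := by
    have := congrArg (fun Z => star U * Z * U) h
    simp only [myConjMul hUmem] at this
    have hA' : star U * A * U = diagonal (RCLike.ofReal ∘ lam) := by
      rw [hspec]
      calc star U * (U * diagonal (RCLike.ofReal ∘ lam) * star U) * U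
          = (star U * U) * diagonal (RCLike.ofReal ∘ lam) * (star U * U) := by noncomm_ring
        _ = diagonal (RCLike.ofReal ∘ lam) := by rw [hU1']; simp
    rwa [hA'] at this
  have hent : ∀ i j, lam i * T i j = T i j * lam j := by
    intro i j
    have := congrFun (congrFun hDT i) j
    simpa [Matrix.diagonal_mul, Matrix.mul_diagonal, RCLike.ofReal_real_eq_id,
      mul_comm] using this
  have hDT' : diagonal (RCLike.ofReal ∘ Real.sqrt ∘ lam) * T
      = T * diagonal (RCLike.ofReal ∘ Real.sqrt ∘ lam) := by
    ext i j
    simp only [Matrix.diagonal_mul, Matrix.mul_diagonal, Function.comp_apply,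
      RCLike.ofReal_real_eq_id, id_eq]
    rcases eq_or_ne (T i j) 0 with h0 | h0
    · simp [h0]
    · have : lam i = lam j := by
        have := hent i j
        rw [mul_comm (T i j) (lam j)] at this
        exact mul_right_cancel₀ h0 this
      rw [this, mul_comm]
  have hsq : hA.sqrt = U * diagonal (RCLike.ofReal ∘ Real.sqrt ∘ lam) * star U := rfl
  apply conj_inj hUmem
  rw [myConjMul hUmem, myConjMul hUmem]
  have hs' : star U * hA.sqrt * U = diagonal (RCLike.ofReal ∘ Real.sqrt ∘ lam) := by
    rw [hsq]
    calc star U * (U * diagonal (RCLike.ofReal ∘ Real.sqrt ∘ lam) * star U) * U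
        = (star U * U) * diagonal (RCLike.ofReal ∘ Real.sqrt ∘ lam) * (star U * U) := by
          noncomm_ring
      _ = diagonal (RCLike.ofReal ∘ Real.sqrt ∘ lam) := by rw [hU1']; simp
  rw [hs', hDT']

/-- Trace is at most the trace of a PSD square root of `Nᵀ N`. -/
private lemma trace_le_of_sq {N C : Matrix (Fin n) (Fin n) ℝ} (hC : C.PosSemidef)
    (h : C * C = Nᵀ * N) : N.trace ≤ C.trace := by
  set U : Matrix (Fin n) (Fin n) ℝ := (hC.1.eigenvectorUnitary : Matrix (Fin n) (Fin n) ℝ) with hUdef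
  have hUmem : U ∈ Matrix.unitaryGroup (Fin n) ℝ := hC.1.eigenvectorUnitary.2
  have hU1 : U * star U = 1 := (Matrix.mem_unitaryGroup_iff).mp hUmem
  have hU1' : star U * U = 1 := (Matrix.mem_unitaryGroup_iff').mp hUmem
  set lam := hC.1.eigenvalues with hlam
  have hlam0 : ∀ i, 0 ≤ lam i := fun i => hC.eigenvalues_nonneg i
  have hspec : C = U * diagonal (RCLike.ofReal ∘ lam) * star U := hC.1.spectral_theorem
  set M := star U * N * U with hM
  -- trace N = trace M
  have htrN : N.trace = M.trace := by
    rw [hM, Matrix.trace_mul_cycle, hU1, one_mul]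
  -- trace C = ∑ lam
  have htrC : C.trace = ∑ i, lam i := by
    rw [hspec, Matrix.trace_mul_cycle, hU1', one_mul, Matrix.trace_diagonal]
    simp [RCLike.ofReal_real_eq_id]
  -- star M * M = diagonal lam ^2
  have hNt : star N = Nᵀ := by
    ext i j
    simp [Matrix.star_apply]
  have hMM : star M * M = diagonal (fun i => lam i * lam i) := by
    have hstarM : star M = star U * star N * U := by
      rw [hM]
      simp [Matrix.star_mul, mul_assoc]
    rw [hstarM, hM]
    calc star U * star N * U * (star U * N * U)
        = star U * (star N * (U * star U) * N) * U := by noncomm_ring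
      _ = star U * (star N * N) * U := by rw [hU1]; noncomm_ring
      _ = star U * (C * C) * U := by rw [hNt, ← h]
      _ = (star U * C * U) * (star U * C * U) := by
          rw [← myConjMul hUmem]
      _ = diagonal (fun i => lam i * lam i) := by
          have hC' : star U * C * U = diagonal (RCLike.ofReal ∘ lam) := by
            rw [hspec]
            calc star U * (U * diagonal (RCLike.ofReal ∘ lam) * star U) * U
                = (star U * U) * diagonal (RCLike.ofReal ∘ lam) * (star U * U) := by noncomm_ring
              _ = diagonal (RCLike.ofReal ∘ lam) := by rw [hU1']; simp
          rw [hC', Matrix.diagonal_mul_diagonal]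
          ext i j
          simp [Matrix.diagonal_apply, RCLike.ofReal_real_eq_id]
  have hdiagMM : ∀ i, ∑ j, (M j i) ^ 2 = (lam i) ^ 2 := by
    intro i
    have := congrFun (congrFun hMM i) i
    simp only [Matrix.mul_apply, Matrix.star_apply, star_trivial,
      Matrix.diagonal_apply_eq] at this
    calc ∑ j, (M j i)^2 = ∑ j, M j i * M j i := by
          simp [pow_two]
      _ = lam i * lam i := this
      _ = lam i ^ 2 := by ring
  -- key per-index inequality
  have hkey : ∀ i, M i i ≤ lam i := by
    intro i
    have h1 : (M i i) ^ 2 ≤ ∑ j, (M j i) ^ 2 :=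
      Finset.single_le_sum (fun j _ => sq_nonneg (M j i)) (Finset.mem_univ i)
    rw [hdiagMM i] at h1
    calc M i i ≤ |M i i| := le_abs_self _
      _ = Real.sqrt ((M i i) ^ 2) := (Real.sqrt_sq_eq_abs _).symm
      _ ≤ Real.sqrt ((lam i) ^ 2) := Real.sqrt_le_sqrt h1
      _ = lam i := Real.sqrt_sq (hlam0 i)
  rw [htrN, htrC, Matrix.trace]
  exact Finset.sum_le_sum fun i _ => hkey i

/-- For Gaussians `p = N(μ₁, S₁)` and `q = N(μ₂, S₂)` on `ℝⁿ`, the probability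
flow distance `(‖μ₁ − μ₂‖₂² + ‖S₁^{1/2} − S₂^{1/2}‖_F²)^{1/2}` is at least the
2-Wasserstein distance
`(‖μ₁ − μ₂‖₂² + Tr(S₁ + S₂ − 2(S₁^{1/2} S₂ S₁^{1/2})^{1/2}))^{1/2}`,
with equality when `S₁` and `S₂` commute. -/
theorem gaussian_w2_le_pfd {n : ℕ} (μ₁ μ₂ : EuclideanSpace ℝ (Fin n))
    {S₁ S₂ : Matrix (Fin n) (Fin n) ℝ}
    (h₁ : S₁.PosSemidef) (h₂ : S₂.PosSemidef)
    (hP : (h₁.sqrt * S₂ * h₁.sqrt).PosSemidef) :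
    Real.sqrt (‖μ₁ - μ₂‖ ^ 2 + (S₁ + S₂ - (2 : ℝ) • hP.sqrt).trace) ≤
      Real.sqrt (‖μ₁ - μ₂‖ ^ 2 + ∑ i, ∑ j, (h₁.sqrt i j - h₂.sqrt i j) ^ 2) ∧
    (S₁ * S₂ = S₂ * S₁ →
      Real.sqrt (‖μ₁ - μ₂‖ ^ 2 + (S₁ + S₂ - (2 : ℝ) • hP.sqrt).trace) =
        Real.sqrt (‖μ₁ - μ₂‖ ^ 2 + ∑ i, ∑ j, (h₁.sqrt i j - h₂.sqrt i j) ^ 2)) := by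
  set A := h₁.sqrt with hAdef
  set B := h₂.sqrt with hBdef
  have hAh : Aᵀ = A := by
    rw [← Matrix.conjTranspose_eq_transpose_of_trivial]
    exact h₁.posSemidef_sqrt.1
  have hBh : Bᵀ = B := by
    rw [← Matrix.conjTranspose_eq_transpose_of_trivial]
    exact h₂.posSemidef_sqrt.1
  have hAsym : ∀ i j, A j i = A i j := fun i j => congrFun (congrFun hAh i) j
  have hBsym : ∀ i j, B j i = B i j := fun i j => congrFun (congrFun hBh i) j
  have trace_mul_eq : ∀ X Y : Matrix (Fin n) (Fin n) ℝ,
      (X * Y).trace = ∑ i, ∑ j, X i j * Y j i := by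
    intro X Y
    simp [Matrix.trace, Matrix.mul_apply, Matrix.diag]
  -- Frobenius expansion
  have hsum : ∑ i, ∑ j, (A i j - B i j) ^ 2
      = S₁.trace + S₂.trace - 2 * (A * B).trace := by
    have e1 : ∑ i, ∑ j, (A i j - B i j) ^ 2
        = ∑ i, ∑ j, (A i j * A j i + B i j * B j i - 2 * (A i j * B j i)) := by
      refine Finset.sum_congr rfl fun i _ => Finset.sum_congr rfl fun j _ => ?_
      rw [hAsym j i, hBsym j i]
      ring
    rw [e1]
    have e2 : S₁.trace = (A * A).trace := by rw [h₁.sqrt_mul_self]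
    have e3 : S₂.trace = (B * B).trace := by rw [h₂.sqrt_mul_self]
    rw [e2, e3, trace_mul_eq, trace_mul_eq, trace_mul_eq]
    simp only [Finset.sum_sub_distrib, Finset.sum_add_distrib, Finset.mul_sum]
  -- trace of the LHS matrix
  have htr : (S₁ + S₂ - (2 : ℝ) • hP.sqrt).trace
      = S₁.trace + S₂.trace - 2 * hP.sqrt.trace := by
    rw [Matrix.trace_sub, Matrix.trace_add, Matrix.trace_smul]
    simp [smul_eq_mul]
  -- main inequality : trace (A * B) ≤ trace of hP.sqrt
  have hineq : (A * B).trace ≤ hP.sqrt.trace := by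
    have hsq : hP.sqrt * hP.sqrt = (B * A)ᵀ * (B * A) := by
      rw [hP.sqrt_mul_self, Matrix.transpose_mul, hAh, hBh, ← h₂.sqrt_mul_self]
      noncomm_ring
    have := trace_le_of_sq hP.posSemidef_sqrt hsq
    rwa [Matrix.trace_mul_comm] at this
  refine ⟨?_, ?_⟩
  · apply Real.sqrt_le_sqrt
    rw [htr, hsum]
    have : 2 * (A * B).trace ≤ 2 * hP.sqrt.trace := by linarith
    linarith
  · intro hc
    have step1 : A * S₂ = S₂ * A := sqrt_comm h₁ hc
    have step2 : B * A = A * B := sqrt_comm h₂ step1.symm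
    have hA' : A.PosSemidef := h₁.posSemidef_sqrt
    have hRB : hA'.sqrt * B = B * hA'.sqrt := sqrt_comm hA' step2.symm
    have hRh : hA'.sqrtᴴ = hA'.sqrt := hA'.posSemidef_sqrt.1
    have hABpsd : (A * B).PosSemidef := by
      have : A * B = hA'.sqrt * B * hA'.sqrtᴴ := by
        rw [hRh]
        calc A * B = hA'.sqrt * hA'.sqrt * B := by rw [hA'.sqrt_mul_self]
          _ = hA'.sqrt * (hA'.sqrt * B) := by rw [mul_assoc]
          _ = hA'.sqrt * (B * hA'.sqrt) := by rw [hRB]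
          _ = hA'.sqrt * B * hA'.sqrt := by rw [mul_assoc]
      rw [this]
      exact h₂.posSemidef_sqrt.mul_mul_conjTranspose_same hA'.sqrt
    have hsqeq : A * B = hP.sqrt := by
      apply hABpsd.eq_sqrt_of_sq_eq
      rw [pow_two]
      calc A * B * (A * B) = A * (B * A) * B := by noncomm_ring
        _ = A * (A * B) * B := by rw [step2]
        _ = A * A * (B * B) := by noncomm_ring
        _ = A * A * S₂ := by rw [h₂.sqrt_mul_self]
        _ = A * S₂ * A := by
            rw [mul_assoc, step1, ← mul_assoc, step1]
    congr 1
    rw [htr, hsum, ← hsqeq]
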